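/- Let κ > 0, K > 0 and let ψ̂ : ℝ → ℂ satisfy ψ̂(0) = 0 and |ψ̂(u) − ψ̂(v)| ≤ K|u − v|^κ for all u, v ∈ ℝ. Let g ∈ L¹(ℝ, ℂ) satisfy ∫_ℝ |g(z)| |z|^{2κ} dz < ∞, and define R(τ) = (1/2π) ∫_ℝ g(z) e^{iτz} dz. Let ψ ∈ L¹(ℝ) ∩ L²(ℝ) have Fourier transform ψ̂ (convention ψ̂(y) = ∫_ℝ e^{−iyx} ψ(x) dx), and set ψ_{jk}(x) = 2^{j/2} ψ(2^j x − k). Then for all j ∈ ℕ₀ and all k, l ∈ ℤ, |∫_ℝ ∫_ℝ R(u − v) conj(ψ_{jk}(u)) ψ_{jl}(v) du dv| ≤ (K² / (2π · 2^{j(1+2κ)})) ∫_ℝ |g(z)| |z|^{2κ} dz. -/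

import Mathlib

open MeasureTheory

/-- Auxiliary closed form of the Fourier transform of a scaled/translated wavelet. -/
noncomputable def auxF (ψh : ℝ → ℂ) (c a : ℝ) (m : ℤ) (z : ℝ) : ℂ :=
  (c : ℂ) * ((a⁻¹ : ℝ) • (Complex.exp (-(Complex.I * ((z * m / a : ℝ) : ℂ))) * ψh (z / a)))

lemma auxF_norm (ψh : ℝ → ℂ) {c a : ℝ} (hc : 0 ≤ c) (ha : 0 ≤ a) (m : ℤ) (z : ℝ) :
    ‖auxF ψh c a m z‖ = c * a⁻¹ * ‖ψh (z / a)‖ := by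
  unfold auxF
  rw [norm_mul, norm_smul, norm_mul]
  have h1 : ‖Complex.exp (-(Complex.I * ((z * m / a : ℝ) : ℂ)))‖ = 1 := by
    rw [Complex.norm_exp]; simp
  rw [h1, Complex.norm_real, Real.norm_eq_abs, Real.norm_eq_abs,
    abs_of_nonneg hc, abs_of_nonneg (inv_nonneg.mpr ha)]
  ring

lemma auxF_cont {ψh : ℝ → ℂ} (hψh : Continuous ψh) (c a : ℝ) (m : ℤ) :
    Continuous (auxF ψh c a m) := by
  unfold auxF
  fun_prop

/-- Example 5.2 (deterministic form): for a stationary covariance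
`R(τ) = (1/2π)∫ g(z) e^{iτz} dz` with spectral density `g` having a finite moment of
order `2κ`, and a `κ`-Lipschitz `ψ̂` with `ψ̂(0) = 0`, the wavelet-coefficient
covariances `∫∫ R(u−v) conj(ψ_{jk}(u)) ψ_{jl}(v) du dv` decay like `2^{−j(1+2κ)}`. -/
theorem stationary_covariance_wavelet_coefficient_decay
    (κ K : ℝ) (hκ : 0 < κ) (hK : 0 < K)
    (ψh : ℝ → ℂ) (hψh0 : ψh 0 = 0)
    (hψhLip : ∀ u v : ℝ, ‖ψh u - ψh v‖ ≤ K * |u - v| ^ κ)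
    (g : ℝ → ℂ) (hg : Integrable g)
    (hgmom : Integrable (fun z : ℝ => ‖g z‖ * |z| ^ (2 * κ)))
    (R : ℝ → ℂ)
    (hR : ∀ τ : ℝ, R τ = (1 / (2 * (Real.pi : ℂ))) *
      ∫ z : ℝ, g z * Complex.exp (Complex.I * τ * z))
    (ψ : ℝ → ℂ) (hψ1 : Integrable ψ) (hψ2 : MemLp ψ 2 (volume : Measure ℝ))
    (hψhat : ∀ y : ℝ, ψh y = ∫ x : ℝ, Complex.exp (-(Complex.I * y * x)) * ψ x)
    (ψjk : ℕ → ℤ → ℝ → ℂ)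
    (hψjk : ∀ (j : ℕ) (k : ℤ) (x : ℝ),
      ψjk j k x = (((2 : ℝ) ^ ((j : ℝ) / 2) : ℝ) : ℂ) * ψ ((2 : ℝ) ^ j * x - (k : ℝ)))
    (j : ℕ) (k l : ℤ) :
    ‖∫ u : ℝ, ∫ v : ℝ, R (u - v) * (starRingEnd ℂ) (ψjk j k u) * ψjk j l v‖ ≤
      K ^ 2 / (2 * Real.pi * (2 : ℝ) ^ ((j : ℝ) * (1 + 2 * κ))) *
        ∫ z : ℝ, ‖g z‖ * |z| ^ (2 * κ) := by
  set a : ℝ := (2 : ℝ) ^ j with ha_def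
  set c : ℝ := (2 : ℝ) ^ ((j : ℝ) / 2) with hc_def
  have ha : 0 < a := by positivity
  have hc : 0 < c := by positivity
  -- continuity of ψh
  have hψhcont : Continuous ψh := by
    rw [continuous_iff_continuousAt]
    intro v
    have hgc : Continuous fun u : ℝ => K * |u - v| ^ κ :=
      continuous_const.mul (((continuous_abs.comp (continuous_id.sub continuous_const)).rpow_const
        (fun x => Or.inr hκ.le)))
    have h0 : Filter.Tendsto (fun u : ℝ => K * |u - v| ^ κ) (nhds v) (nhds 0) := by
      have := hgc.tendsto v
      simpa [Real.zero_rpow hκ.ne'] using this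
    rw [ContinuousAt, tendsto_iff_dist_tendsto_zero]
    exact squeeze_zero (fun u => dist_nonneg)
      (fun u => by rw [dist_eq_norm]; exact hψhLip u v) h0
  -- integrability of the wavelets
  have hψm : ∀ m : ℤ, Integrable (ψjk j m) := by
    intro m
    have h1 : Integrable fun x : ℝ => ψ (a * x - (m : ℝ)) :=
      (hψ1.comp_sub_right (m : ℝ)).comp_mul_left' ha.ne'
    exact (h1.const_mul (c : ℂ)).congr
      (Filter.Eventually.of_forall fun x => (hψjk j m x).symm)
  -- integrability of conjugated wavelets
  have hψmc : ∀ m : ℤ, Integrable fun u : ℝ => (starRingEnd ℂ) (ψjk j m u) := by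
    intro m
    refine Integrable.mono' (hψm m).norm
      (continuous_star.comp_aestronglyMeasurable (hψm m).aestronglyMeasurable)
      (Filter.Eventually.of_forall fun u => ?_)
    simp
  -- norm-1 phases
  have hexp1 : ∀ x y : ℝ, ‖Complex.exp (Complex.I * x * y)‖ = 1 := by
    intro x y; rw [Complex.norm_exp]; simp
  have hexp1' : ∀ x y : ℝ, ‖Complex.exp (-(Complex.I * x * y))‖ = 1 := by
    intro x y; rw [Complex.norm_exp]; simp
  -- the Fourier transform of ψjk j m in closed form
  have hhat : ∀ (m : ℤ) (z : ℝ),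
      (∫ v : ℝ, Complex.exp (-(Complex.I * z * v)) * ψjk j m v) = auxF ψh c a m z := by
    intro m z
    set H : ℝ → ℂ :=
      fun w => Complex.exp (-(Complex.I * ((z * (w + (m : ℝ)) / a : ℝ) : ℂ))) * ψ w with hH
    have e0 : ∀ v : ℝ, Complex.exp (-(Complex.I * z * v)) * ψjk j m v
        = (c : ℂ) * H (a * v - (m : ℝ)) := by
      intro v
      rw [hψjk]
      rw [← ha_def, ← hc_def]
      simp only [hH]
      have hr : z * ((a * v - (m : ℝ)) + (m : ℝ)) / a = z * v := by field_simp; ring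
      rw [hr]
      have harg : -(Complex.I * ((z * v : ℝ) : ℂ)) = -(Complex.I * z * v) := by
        push_cast; ring
      rw [harg]; ring
    have h1 : (∫ v : ℝ, H (a * v - (m : ℝ))) = |a⁻¹| • ∫ x : ℝ, H (x - (m : ℝ)) :=
      Measure.integral_comp_mul_left (fun x => H (x - (m : ℝ))) a
    have h2 : (∫ x : ℝ, H (x - (m : ℝ))) = ∫ x : ℝ, H x :=
      integral_sub_right_eq_self H (m : ℝ)
    have h3 : (∫ w : ℝ, H w) =
        Complex.exp (-(Complex.I * ((z * m / a : ℝ) : ℂ))) * ψh (z / a) := by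
      have e1 : ∀ w : ℝ, H w = Complex.exp (-(Complex.I * ((z * m / a : ℝ) : ℂ))) *
          (Complex.exp (-(Complex.I * ((z / a : ℝ) : ℂ) * (w : ℂ))) * ψ w) := by
        intro w
        simp only [hH]
        have hsplit : z * (w + (m : ℝ)) / a = z * (m : ℝ) / a + (z / a) * w := by
          field_simp; ring
        have hsum : -(Complex.I * ((z * (w + (m : ℝ)) / a : ℝ) : ℂ))
            = -(Complex.I * ((z * (m : ℝ) / a : ℝ) : ℂ)) +
              -(Complex.I * ((z / a : ℝ) : ℂ) * (w : ℂ)) := by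
          rw [hsplit]; push_cast; ring
        rw [hsum, Complex.exp_add]; ring
      simp only [e1]
      rw [integral_const_mul, ← hψhat (z / a)]
    calc (∫ v : ℝ, Complex.exp (-(Complex.I * z * v)) * ψjk j m v)
        = ∫ v : ℝ, (c : ℂ) * H (a * v - (m : ℝ)) := by simp only [e0]
      _ = (c : ℂ) * ∫ v : ℝ, H (a * v - (m : ℝ)) := integral_const_mul _ _
      _ = (c : ℂ) * ((a⁻¹ : ℝ) •
            (Complex.exp (-(Complex.I * ((z * m / a : ℝ) : ℂ))) * ψh (z / a))) := by
          rw [h1, h2, h3, abs_of_pos (inv_pos.mpr ha)]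
      _ = auxF ψh c a m z := rfl
  -- norm bound on the Fourier transform
  set C0 : ℝ := K * (c * a⁻¹ * (a⁻¹) ^ κ) with hC0_def
  have hC0 : 0 < C0 := by positivity
  have hbound : ∀ (m : ℤ) (z : ℝ), ‖auxF ψh c a m z‖ ≤ C0 * |z| ^ κ := by
    intro m z
    rw [auxF_norm ψh hc.le ha.le]
    have h1 : ‖ψh (z / a)‖ ≤ K * |z / a| ^ κ := by
      have := hψhLip (z / a) 0
      simpa [hψh0] using this
    have h2 : |z / a| ^ κ = |z| ^ κ * (a⁻¹) ^ κ := by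
      rw [abs_div, abs_of_pos ha, div_eq_mul_inv,
        Real.mul_rpow (abs_nonneg z) (inv_nonneg.mpr ha.le)]
    calc c * a⁻¹ * ‖ψh (z / a)‖ ≤ c * a⁻¹ * (K * (|z| ^ κ * (a⁻¹) ^ κ)) := by
          rw [← h2]; gcongr
      _ = C0 * |z| ^ κ := by rw [hC0_def]; ring
  -- conjugate transform
  have hconjhat : ∀ z : ℝ, (starRingEnd ℂ) (auxF ψh c a k z) =
      ∫ u : ℝ, Complex.exp (Complex.I * z * u) * (starRingEnd ℂ) (ψjk j k u) := by
    intro z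
    rw [← hhat k z, ← integral_conj]
    congr 1
    funext u
    rw [map_mul, ← Complex.exp_conj]
    congr 1
    simp [map_neg, map_mul, Complex.conj_I, Complex.conj_ofReal]
  -- step 1: the inner integral
  have hstep1 : ∀ u : ℝ,
      (∫ v : ℝ, R (u - v) * (starRingEnd ℂ) (ψjk j k u) * ψjk j l v) =
      (starRingEnd ℂ) (ψjk j k u) * ((1 / (2 * (Real.pi : ℂ))) *
        ∫ z : ℝ, (g z * Complex.exp (Complex.I * z * u)) * auxF ψh c a l z) := by
    intro u
    have hker : Integrable (Function.uncurry fun v z : ℝ =>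
        g z * Complex.exp (Complex.I * ((u - v : ℝ) : ℂ) * (z : ℂ)) * ψjk j l v)
        (volume.prod volume) := by
      have base : Integrable (fun p : ℝ × ℝ => ψjk j l p.1 * g p.2) (volume.prod volume) :=
        (hψm l).mul_prod hg
      have hphase : Continuous fun p : ℝ × ℝ =>
          Complex.exp (Complex.I * ((u - p.1 : ℝ) : ℂ) * (p.2 : ℂ)) := by fun_prop
      have h1 := base.bdd_mul hphase.aestronglyMeasurable (c := 1) (Filter.Eventually.of_forall fun p => le_of_eq (hexp1 _ _))
      exact h1.congr (Filter.Eventually.of_forall fun p => by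
        simp only [Function.uncurry]; ring)
    have e1 : ∀ v : ℝ, R (u - v) * (starRingEnd ℂ) (ψjk j k u) * ψjk j l v =
        (starRingEnd ℂ) (ψjk j k u) * ((1 / (2 * (Real.pi : ℂ))) *
          ∫ z : ℝ, g z * Complex.exp (Complex.I * ((u - v : ℝ) : ℂ) * (z : ℂ)) * ψjk j l v) := by
      intro v
      rw [hR (u - v), integral_mul_const]
      ring
    calc (∫ v : ℝ, R (u - v) * (starRingEnd ℂ) (ψjk j k u) * ψjk j l v)
        = ∫ v : ℝ, (starRingEnd ℂ) (ψjk j k u) * ((1 / (2 * (Real.pi : ℂ))) *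
            ∫ z : ℝ, g z * Complex.exp (Complex.I * ((u - v : ℝ) : ℂ) * (z : ℂ)) * ψjk j l v) := by
          simp only [e1]
      _ = (starRingEnd ℂ) (ψjk j k u) * ((1 / (2 * (Real.pi : ℂ))) *
            ∫ v : ℝ, ∫ z : ℝ,
              g z * Complex.exp (Complex.I * ((u - v : ℝ) : ℂ) * (z : ℂ)) * ψjk j l v) := by
          rw [integral_const_mul ((starRingEnd ℂ) (ψjk j k u)),
            integral_const_mul (1 / (2 * (Real.pi : ℂ)))]
      _ = (starRingEnd ℂ) (ψjk j k u) * ((1 / (2 * (Real.pi : ℂ))) *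
            ∫ z : ℝ, ∫ v : ℝ,
              g z * Complex.exp (Complex.I * ((u - v : ℝ) : ℂ) * (z : ℂ)) * ψjk j l v) := by
          rw [integral_integral_swap hker]
      _ = (starRingEnd ℂ) (ψjk j k u) * ((1 / (2 * (Real.pi : ℂ))) *
            ∫ z : ℝ, (g z * Complex.exp (Complex.I * z * u)) * auxF ψh c a l z) := by
          congr 1
          congr 1
          congr 1
          funext z
          have e2 : ∀ v : ℝ, g z * Complex.exp (Complex.I * ((u - v : ℝ) : ℂ) * (z : ℂ)) *
              ψjk j l v = (g z * Complex.exp (Complex.I * z * u)) *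
                (Complex.exp (-(Complex.I * z * v)) * ψjk j l v) := by
            intro v
            have harg : (Complex.I * ((u - v : ℝ) : ℂ) * (z : ℂ)) =
                Complex.I * (z : ℂ) * (u : ℂ) + -(Complex.I * (z : ℂ) * (v : ℂ)) := by
              push_cast; ring
            rw [harg, Complex.exp_add]; ring
          simp only [e2]
          rw [integral_const_mul, hhat l z]
  -- step 2: Fubini for the outer integral
  have key : (∫ u : ℝ, ∫ v : ℝ, R (u - v) * (starRingEnd ℂ) (ψjk j k u) * ψjk j l v) =
      (1 / (2 * (Real.pi : ℂ))) *
        ∫ z : ℝ, (g z * auxF ψh c a l z) * (starRingEnd ℂ) (auxF ψh c a k z) := by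
    have hghatl : Integrable fun z : ℝ => g z * auxF ψh c a l z := by
      refine Integrable.mono' ((hg.norm.add hgmom).const_mul C0)
        (hg.aestronglyMeasurable.mul (auxF_cont hψhcont c a l).aestronglyMeasurable)
        (Filter.Eventually.of_forall fun z => ?_)
      rw [norm_mul]
      have h2 : |z| ^ κ ≤ 1 + |z| ^ (2 * κ) := by
        rcases le_or_gt (|z|) 1 with h | h
        · have h3 : |z| ^ κ ≤ 1 := Real.rpow_le_one (abs_nonneg z) h hκ.le
          nlinarith [Real.rpow_nonneg (abs_nonneg z) (2 * κ)]
        · have h3 : |z| ^ κ ≤ |z| ^ (2 * κ) :=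
            Real.rpow_le_rpow_of_exponent_le h.le (by linarith)
          nlinarith
      calc ‖g z‖ * ‖auxF ψh c a l z‖ ≤ ‖g z‖ * (C0 * |z| ^ κ) :=
            mul_le_mul_of_nonneg_left (hbound l z) (norm_nonneg _)
        _ ≤ ‖g z‖ * (C0 * (1 + |z| ^ (2 * κ))) := by gcongr
        _ = C0 * (‖g z‖ + ‖g z‖ * |z| ^ (2 * κ)) := by ring
    have hker2 : Integrable (Function.uncurry fun u z : ℝ =>
        (starRingEnd ℂ) (ψjk j k u) *
          ((g z * Complex.exp (Complex.I * z * u)) * auxF ψh c a l z)) (volume.prod volume) := by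
      have base : Integrable (fun p : ℝ × ℝ =>
          (starRingEnd ℂ) (ψjk j k p.1) * (g p.2 * auxF ψh c a l p.2)) (volume.prod volume) :=
        (hψmc k).mul_prod hghatl
      have hphase : Continuous fun p : ℝ × ℝ =>
          Complex.exp (Complex.I * (p.2 : ℂ) * (p.1 : ℂ)) := by fun_prop
      have h1 := base.bdd_mul hphase.aestronglyMeasurable (c := 1) (Filter.Eventually.of_forall fun p => le_of_eq (hexp1 _ _))
      exact h1.congr (Filter.Eventually.of_forall fun p => by
        simp only [Function.uncurry]; ring)
    calc (∫ u : ℝ, ∫ v : ℝ, R (u - v) * (starRingEnd ℂ) (ψjk j k u) * ψjk j l v)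
        = ∫ u : ℝ, (starRingEnd ℂ) (ψjk j k u) * ((1 / (2 * (Real.pi : ℂ))) *
            ∫ z : ℝ, (g z * Complex.exp (Complex.I * z * u)) * auxF ψh c a l z) := by
          simp only [hstep1]
      _ = (1 / (2 * (Real.pi : ℂ))) * ∫ u : ℝ, ∫ z : ℝ, (starRingEnd ℂ) (ψjk j k u) *
            ((g z * Complex.exp (Complex.I * z * u)) * auxF ψh c a l z) := by
          rw [← integral_const_mul (1 / (2 * (Real.pi : ℂ)))
            (fun u : ℝ => ∫ z : ℝ, (starRingEnd ℂ) (ψjk j k u) *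
              ((g z * Complex.exp (Complex.I * z * u)) * auxF ψh c a l z))]
          congr 1
          funext u
          rw [integral_const_mul ((starRingEnd ℂ) (ψjk j k u))]
          ring
      _ = (1 / (2 * (Real.pi : ℂ))) * ∫ z : ℝ, ∫ u : ℝ, (starRingEnd ℂ) (ψjk j k u) *
            ((g z * Complex.exp (Complex.I * z * u)) * auxF ψh c a l z) := by
          rw [integral_integral_swap hker2]
      _ = (1 / (2 * (Real.pi : ℂ))) *
            ∫ z : ℝ, (g z * auxF ψh c a l z) * (starRingEnd ℂ) (auxF ψh c a k z) := by
          congr 1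
          congr 1
          funext z
          have e2 : ∀ u : ℝ, (starRingEnd ℂ) (ψjk j k u) *
              ((g z * Complex.exp (Complex.I * z * u)) * auxF ψh c a l z) =
              (g z * auxF ψh c a l z) *
                (Complex.exp (Complex.I * z * u) * (starRingEnd ℂ) (ψjk j k u)) := by
            intro u; ring
          simp only [e2]
          rw [integral_const_mul (g z * auxF ψh c a l z), ← hconjhat z]
  -- step 3: the bound
  rw [key, norm_mul]
  have hnorm_const : ‖(1 / (2 * (Real.pi : ℂ)))‖ = (2 * Real.pi)⁻¹ := by
    have h1 : (1 / (2 * (Real.pi : ℂ))) = (((2 * Real.pi)⁻¹ : ℝ) : ℂ) := by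
      push_cast; ring
    rw [h1, Complex.norm_real, Real.norm_eq_abs, abs_of_pos (by positivity)]
  have hS : ‖∫ z : ℝ, (g z * auxF ψh c a l z) * (starRingEnd ℂ) (auxF ψh c a k z)‖ ≤
      (C0 * C0) * ∫ z : ℝ, ‖g z‖ * |z| ^ (2 * κ) := by
    have hb : ∀ z : ℝ, ‖(g z * auxF ψh c a l z) * (starRingEnd ℂ) (auxF ψh c a k z)‖ ≤
        (C0 * C0) * (‖g z‖ * |z| ^ (2 * κ)) := by
      intro z
      rw [norm_mul, norm_mul, RCLike.norm_conj]
      have h2κ : |z| ^ (2 * κ) = |z| ^ κ * |z| ^ κ := by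
        rw [show 2 * κ = κ + κ by ring, Real.rpow_add' (abs_nonneg z) (by positivity)]
      calc ‖g z‖ * ‖auxF ψh c a l z‖ * ‖auxF ψh c a k z‖
          ≤ ‖g z‖ * (C0 * |z| ^ κ) * (C0 * |z| ^ κ) := by
            gcongr <;> [exact hbound l z; exact hbound k z]
        _ = (C0 * C0) * (‖g z‖ * |z| ^ (2 * κ)) := by rw [h2κ]; ring
    calc ‖∫ z : ℝ, (g z * auxF ψh c a l z) * (starRingEnd ℂ) (auxF ψh c a k z)‖
        ≤ ∫ z : ℝ, (C0 * C0) * (‖g z‖ * |z| ^ (2 * κ)) :=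
          norm_integral_le_of_norm_le (hgmom.const_mul _) (Filter.Eventually.of_forall hb)
      _ = (C0 * C0) * ∫ z : ℝ, ‖g z‖ * |z| ^ (2 * κ) := integral_const_mul _ _
  have hconst : (2 * Real.pi)⁻¹ * (C0 * C0) =
      K ^ 2 / (2 * Real.pi * (2 : ℝ) ^ ((j : ℝ) * (1 + 2 * κ))) := by
    have haR : a = (2 : ℝ) ^ ((j : ℝ)) := ha_def.trans (Real.rpow_natCast 2 j).symm
    have hainv : a⁻¹ = (2 : ℝ) ^ (-(j : ℝ)) := by
      rw [haR]; exact (Real.rpow_neg (by norm_num) _).symm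
    have hainvκ : (a⁻¹) ^ κ = (2 : ℝ) ^ (-(j : ℝ) * κ) := by
      rw [hainv, ← Real.rpow_mul (by norm_num)]
    have hX : c * a⁻¹ * (a⁻¹) ^ κ = (2 : ℝ) ^ ((j : ℝ)/2 + -(j : ℝ) + -(j : ℝ) * κ) := by
      rw [hc_def, hainvκ, hainv, Real.rpow_add (by norm_num : (0:ℝ) < 2),
        Real.rpow_add (by norm_num : (0:ℝ) < 2)]
    have h2 : (2 : ℝ) ^ ((j : ℝ)/2 + -(j : ℝ) + -(j : ℝ) * κ) *
        (2 : ℝ) ^ ((j : ℝ)/2 + -(j : ℝ) + -(j : ℝ) * κ) =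
        ((2 : ℝ) ^ ((j : ℝ) * (1 + 2 * κ)))⁻¹ := by
      rw [← Real.rpow_add (by norm_num : (0:ℝ) < 2)]
      rw [show (j : ℝ)/2 + -(j : ℝ) + -(j : ℝ) * κ + ((j : ℝ)/2 + -(j : ℝ) + -(j : ℝ) * κ)
        = -((j : ℝ) * (1 + 2 * κ)) by ring]
      exact Real.rpow_neg (by norm_num) _
    rw [hC0_def, hX]
    calc (2 * Real.pi)⁻¹ * (K * (2 : ℝ) ^ ((j : ℝ)/2 + -(j : ℝ) + -(j : ℝ) * κ) *
          (K * (2 : ℝ) ^ ((j : ℝ)/2 + -(j : ℝ) + -(j : ℝ) * κ)))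
        = K ^ 2 * ((2 : ℝ) ^ ((j : ℝ)/2 + -(j : ℝ) + -(j : ℝ) * κ) *
          (2 : ℝ) ^ ((j : ℝ)/2 + -(j : ℝ) + -(j : ℝ) * κ)) * (2 * Real.pi)⁻¹ := by ring
      _ = K ^ 2 * ((2 : ℝ) ^ ((j : ℝ) * (1 + 2 * κ)))⁻¹ * (2 * Real.pi)⁻¹ := by rw [h2]
      _ = K ^ 2 / (2 * Real.pi * (2 : ℝ) ^ ((j : ℝ) * (1 + 2 * κ))) := by
          rw [div_eq_mul_inv, mul_inv]; ring
  calc ‖(1 / (2 * (Real.pi : ℂ)))‖ *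
        ‖∫ z : ℝ, (g z * auxF ψh c a l z) * (starRingEnd ℂ) (auxF ψh c a k z)‖
      ≤ (2 * Real.pi)⁻¹ * ((C0 * C0) * ∫ z : ℝ, ‖g z‖ * |z| ^ (2 * κ)) := by
        rw [hnorm_const]
        have : (0:ℝ) ≤ (2 * Real.pi)⁻¹ := by positivity
        exact mul_le_mul_of_nonneg_left hS this
    _ = K ^ 2 / (2 * Real.pi * (2 : ℝ) ^ ((j : ℝ) * (1 + 2 * κ))) *
        ∫ z : ℝ, ‖g z‖ * |z| ^ (2 * κ) := by rw [← mul_assoc, hconst]
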